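/- There exists an operator 𝒜 : C⁰([0,T],H) → L^{p'}(I,H*) satisfying the C⁰-Bochner condition (M) that is not C⁰-Bochner pseudo-monotone. Concretely, let H be a separable infinite-dimensional Hilbert space with orthonormal basis (eₙ), R : H → H* the Riesz isomorphism, and (𝒜x)(t) := −R(x(t)). Then 𝒜 is weakly continuous (hence satisfies condition (M)), but the sequence xₙ ≡ eₙ satisfies xₙ ⇀ 0 in C⁰([0,T],H) and limsupₙ ⟨𝒜xₙ, xₙ − 0⟩_{L^p(I,H)} = −T < 0, while liminfₙ ⟨𝒜xₙ, xₙ − y⟩_{L^p(I,H)} = −T < 0 = ⟨𝒜0, 0 − y⟩_{L^p(I,H)} for every y ∈ L^p(I,H), so C⁰-Bochner pseudo-monotonicity fails. -/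

import Mathlib

open MeasureTheory ENNReal Filter

/-- Weak convergence of a sequence in a normed space, in terms of the continuous dual. -/
def WeakConv {E : Type*} [NormedAddCommGroup E] [NormedSpace ℝ E]
    (u : ℕ → E) (x : E) : Prop :=
  ∀ f : StrongDual ℝ E, Tendsto (fun n => f (u n)) atTop (nhds (f x))

/-- An orthonormal sequence tends weakly to zero (Bessel's inequality). -/
lemma tendsto_inner_orthonormal {H : Type*} [NormedAddCommGroup H] [InnerProductSpace ℝ H]
    (e : ℕ → H) (he : Orthonormal ℝ e) (z : H) :
    Tendsto (fun n => (inner ℝ z (e n) : ℝ)) atTop (nhds 0) := by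
  have hsum : Summable fun n => ‖(inner ℝ (e n) z : ℝ)‖ ^ 2 := he.inner_products_summable z
  have h0 : Tendsto (fun n => ‖(inner ℝ (e n) z : ℝ)‖ ^ 2) atTop (nhds 0) :=
    hsum.tendsto_atTop_zero
  have h1 : Tendsto (fun n => |(inner ℝ (e n) z : ℝ)|) atTop (nhds 0) := by
    simpa [Real.sqrt_sq_eq_abs] using h0.sqrt
  have h2 : Tendsto (fun n => (inner ℝ (e n) z : ℝ)) atTop (nhds 0) :=
    tendsto_zero_iff_norm_tendsto_zero.2 (by simpa [Real.norm_eq_abs] using h1)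
  simpa [real_inner_comm] using h2

theorem stmt_16 {H : Type*} [NormedAddCommGroup H] [InnerProductSpace ℝ H] [CompleteSpace H]
    [TopologicalSpace.SeparableSpace H] (hinf : ¬ FiniteDimensional ℝ H)
    (e : ℕ → H) (he : Orthonormal ℝ e)
    (hbasis : (Submodule.span ℝ (Set.range e)).topologicalClosure = ⊤)
    (T : ℝ) (hT : 0 < T) (p : ℝ≥0∞) [Fact (1 ≤ p)] (hp : 1 < p) (hp' : p ≠ ∞)
    (ι : C(Set.Icc (0:ℝ) T, H) →L[ℝ] Lp H p (volume.restrict (Set.Ioo 0 T)))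
    (hι : ∀ y : C(Set.Icc (0:ℝ) T, H),
      (ι y : ℝ → H) =ᵐ[volume.restrict (Set.Ioo 0 T)]
        fun t => y (Set.projIcc 0 T hT.le t))
    (𝒜 : C(Set.Icc (0:ℝ) T, H) →
      StrongDual ℝ (Lp H p (volume.restrict (Set.Ioo 0 T))))
    (h𝒜 : ∀ (x : C(Set.Icc (0:ℝ) T, H)) (y : Lp H p (volume.restrict (Set.Ioo 0 T))),
      𝒜 x y = -∫ t, (inner ℝ (x (Set.projIcc 0 T hT.le t)) (y t) : ℝ)
        ∂(volume.restrict (Set.Ioo 0 T))) :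
    -- 𝒜 satisfies the C⁰-Bochner condition (M) (it is even weakly continuous)
    (∀ (u : ℕ → C(Set.Icc (0:ℝ) T, H)) (x : C(Set.Icc (0:ℝ) T, H))
        (ξ : StrongDual ℝ (Lp H p (volume.restrict (Set.Ioo 0 T)))),
      WeakConv u x → WeakConv (fun n => 𝒜 (u n)) ξ →
      limsup (fun n => 𝒜 (u n) (ι (u n))) atTop ≤ ξ (ι x) → 𝒜 x = ξ) ∧
    -- the sequence xₙ ≡ eₙ converges weakly to 0 in C⁰([0,T],H)
    WeakConv (fun n => ContinuousMap.const (Set.Icc (0:ℝ) T) (e n))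
      (0 : C(Set.Icc (0:ℝ) T, H)) ∧
    -- limsupₙ ⟨𝒜xₙ, xₙ − 0⟩ = −T < 0
    (limsup (fun n => 𝒜 (ContinuousMap.const (Set.Icc (0:ℝ) T) (e n))
        (ι (ContinuousMap.const (Set.Icc (0:ℝ) T) (e n)))) atTop = -T) ∧
    -- liminfₙ ⟨𝒜xₙ, xₙ − y⟩ = −T < 0 = ⟨𝒜0, 0 − y⟩ for every y
    (∀ y : Lp H p (volume.restrict (Set.Ioo 0 T)),
      liminf (fun n => 𝒜 (ContinuousMap.const (Set.Icc (0:ℝ) T) (e n))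
          (ι (ContinuousMap.const (Set.Icc (0:ℝ) T) (e n)) - y)) atTop = -T ∧
      𝒜 0 ((0 : Lp H p (volume.restrict (Set.Ioo 0 T))) - y) = 0) ∧
    -- hence 𝒜 is not C⁰-Bochner pseudo-monotone
    ¬ (∀ (u : ℕ → C(Set.Icc (0:ℝ) T, H)) (x : C(Set.Icc (0:ℝ) T, H)),
      WeakConv u x →
      limsup (fun n => 𝒜 (u n) (ι (u n) - ι x)) atTop ≤ 0 →
      ∀ y : Lp H p (volume.restrict (Set.Ioo 0 T)),
        𝒜 x (ι x - y) ≤ liminf (fun n => 𝒜 (u n) (ι (u n) - y)) atTop) := by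
  haveI hfin : IsFiniteMeasure (volume.restrict (Set.Ioo (0:ℝ) T)) := by
    constructor
    rw [Measure.restrict_apply_univ, Real.volume_Ioo]
    exact ENNReal.ofReal_lt_top
  have hμuniv : ((volume.restrict (Set.Ioo (0:ℝ) T)) Set.univ).toReal = T := by
    rw [Measure.restrict_apply_univ, Real.volume_Ioo, sub_zero,
      ENNReal.toReal_ofReal hT.le]
  have hyint : ∀ y : Lp H p (volume.restrict (Set.Ioo (0:ℝ) T)), Integrable (y : ℝ → H) (volume.restrict (Set.Ioo (0:ℝ) T)) :=
    fun y => (Lp.memLp y).integrable Fact.out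
  -- inner product of e_n with itself is 1
  have hee : ∀ n, (inner ℝ (e n) (e n) : ℝ) = 1 := by
    intro n
    simpa using orthonormal_iff_ite.mp he n n
  -- value of 𝒜 at a constant function
  have hAconst : ∀ (n : ℕ) (y : Lp H p (volume.restrict (Set.Ioo (0:ℝ) T))),
      𝒜 (ContinuousMap.const (Set.Icc (0:ℝ) T) (e n)) y
        = -(inner ℝ (e n) (∫ t, y t ∂(volume.restrict (Set.Ioo (0:ℝ) T))) : ℝ) := by
    intro n y
    rw [h𝒜]
    congr 1
    simp only [ContinuousMap.const_apply]
    exact integral_inner (hyint y) (e n)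
  -- value of 𝒜 x_n at ι x_n
  have hAself : ∀ n : ℕ,
      𝒜 (ContinuousMap.const (Set.Icc (0:ℝ) T) (e n))
        (ι (ContinuousMap.const (Set.Icc (0:ℝ) T) (e n))) = -T := by
    intro n
    rw [h𝒜]
    have hcongr : ∫ t, (inner ℝ ((ContinuousMap.const (Set.Icc (0:ℝ) T) (e n))
          (Set.projIcc 0 T hT.le t))
        ((ι (ContinuousMap.const (Set.Icc (0:ℝ) T) (e n))) t) : ℝ) ∂(volume.restrict (Set.Ioo (0:ℝ) T))
        = ∫ _t, (1 : ℝ) ∂(volume.restrict (Set.Ioo (0:ℝ) T)) := by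
      refine integral_congr_ae ?_
      filter_upwards [hι (ContinuousMap.const (Set.Icc (0:ℝ) T) (e n))] with t ht
      rw [ht]
      simpa [ContinuousMap.const_apply] using hee n
    rw [hcongr, integral_const, measureReal_def, hμuniv, smul_eq_mul, mul_one]
  -- weak continuity of 𝒜 in its first argument (tested against a fixed y)
  have hAcont : ∀ (y : Lp H p (volume.restrict (Set.Ioo (0:ℝ) T))) (u : ℕ → C(Set.Icc (0:ℝ) T, H))
      (x : C(Set.Icc (0:ℝ) T, H)), WeakConv u x →
      Tendsto (fun n => 𝒜 (u n) y) atTop (nhds (𝒜 x y)) := by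
    intro y u x hu
    have hxm : ∀ x : C(Set.Icc (0:ℝ) T, H),
        Integrable (fun t => (inner ℝ (x (Set.projIcc 0 T hT.le t)) (y t) : ℝ)) (volume.restrict (Set.Ioo (0:ℝ) T)) := by
      intro x
      have hm : AEStronglyMeasurable (fun t => x (Set.projIcc 0 T hT.le t)) (volume.restrict (Set.Ioo (0:ℝ) T)) :=
        (x.continuous.comp continuous_projIcc).aestronglyMeasurable
      refine Integrable.mono' (((hyint y).norm.const_mul ‖x‖))
        (AEStronglyMeasurable.inner hm (Lp.aestronglyMeasurable y)) ?_
      filter_upwards with t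
      calc ‖(inner ℝ (x (Set.projIcc 0 T hT.le t)) (y t) : ℝ)‖
          ≤ ‖x (Set.projIcc 0 T hT.le t)‖ * ‖y t‖ := norm_inner_le_norm _ _
        _ ≤ ‖x‖ * ‖y t‖ :=
            mul_le_mul_of_nonneg_right (x.norm_coe_le_norm _) (norm_nonneg _)
    let Fy : C(Set.Icc (0:ℝ) T, H) →L[ℝ] ℝ :=
      LinearMap.mkContinuous
        { toFun := fun x => -∫ t, (inner ℝ (x (Set.projIcc 0 T hT.le t)) (y t) : ℝ) ∂(volume.restrict (Set.Ioo (0:ℝ) T))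
          map_add' := by
            intro a b
            have : ∫ t, (inner ℝ ((a + b) (Set.projIcc 0 T hT.le t)) (y t) : ℝ) ∂(volume.restrict (Set.Ioo (0:ℝ) T))
                = (∫ t, (inner ℝ (a (Set.projIcc 0 T hT.le t)) (y t) : ℝ) ∂(volume.restrict (Set.Ioo (0:ℝ) T)))
                  + ∫ t, (inner ℝ (b (Set.projIcc 0 T hT.le t)) (y t) : ℝ) ∂(volume.restrict (Set.Ioo (0:ℝ) T)) := by
              rw [← integral_add (hxm a) (hxm b)]
              refine integral_congr_ae (Eventually.of_forall fun t => ?_)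
              simp [inner_add_left]
            rw [this]; ring
          map_smul' := by
            intro c a
            have : ∫ t, (inner ℝ ((c • a) (Set.projIcc 0 T hT.le t)) (y t) : ℝ) ∂(volume.restrict (Set.Ioo (0:ℝ) T))
                = c * ∫ t, (inner ℝ (a (Set.projIcc 0 T hT.le t)) (y t) : ℝ) ∂(volume.restrict (Set.Ioo (0:ℝ) T)) := by
              rw [← integral_const_mul]
              refine integral_congr_ae (Eventually.of_forall fun t => ?_)
              simp [real_inner_smul_left]
            rw [this]; simp [mul_neg] }
        (∫ t, ‖y t‖ ∂(volume.restrict (Set.Ioo (0:ℝ) T)))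
        (by
          intro x
          simp only [LinearMap.coe_mk, AddHom.coe_mk, norm_neg]
          calc ‖∫ t, (inner ℝ (x (Set.projIcc 0 T hT.le t)) (y t) : ℝ) ∂(volume.restrict (Set.Ioo (0:ℝ) T))‖
              ≤ ∫ t, ‖(inner ℝ (x (Set.projIcc 0 T hT.le t)) (y t) : ℝ)‖ ∂(volume.restrict (Set.Ioo (0:ℝ) T)) :=
                norm_integral_le_integral_norm _
            _ ≤ ∫ t, ‖y t‖ * ‖x‖ ∂(volume.restrict (Set.Ioo (0:ℝ) T)) := by
                refine integral_mono_of_nonneg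
                  (Eventually.of_forall fun t => norm_nonneg _)
                  ((hyint y).norm.mul_const ‖x‖)
                  (Eventually.of_forall fun t => ?_)
                calc ‖(inner ℝ (x (Set.projIcc 0 T hT.le t)) (y t) : ℝ)‖
                    ≤ ‖x (Set.projIcc 0 T hT.le t)‖ * ‖y t‖ := norm_inner_le_norm _ _
                  _ ≤ ‖x‖ * ‖y t‖ := mul_le_mul_of_nonneg_right
                      (x.norm_coe_le_norm _) (norm_nonneg _)
                  _ = ‖y t‖ * ‖x‖ := mul_comm _ _
            _ = (∫ t, ‖y t‖ ∂(volume.restrict (Set.Ioo (0:ℝ) T))) * ‖x‖ := integral_mul_const _ _)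
    have hFy : ∀ x : C(Set.Icc (0:ℝ) T, H), Fy x = 𝒜 x y := fun x => (h𝒜 x y).symm
    have := hu Fy
    simpa [hFy] using this
  -- condition (M)
  have hM : ∀ (u : ℕ → C(Set.Icc (0:ℝ) T, H)) (x : C(Set.Icc (0:ℝ) T, H))
      (ξ : StrongDual ℝ (Lp H p (volume.restrict (Set.Ioo (0:ℝ) T)))),
      WeakConv u x → WeakConv (fun n => 𝒜 (u n)) ξ →
      limsup (fun n => 𝒜 (u n) (ι (u n))) atTop ≤ ξ (ι x) → 𝒜 x = ξ := by
    intro u x ξ hu hξ _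
    refine ContinuousLinearMap.ext fun y => ?_
    have h1 : Tendsto (fun n => 𝒜 (u n) y) atTop (nhds (𝒜 x y)) := hAcont y u x hu
    have h2 : Tendsto (fun n => 𝒜 (u n) y) atTop (nhds (ξ y)) := by
      have := hξ (NormedSpace.inclusionInDoubleDual ℝ (Lp H p (volume.restrict (Set.Ioo (0:ℝ) T))) y)
      simpa [NormedSpace.dual_def] using this
    exact tendsto_nhds_unique h1 h2
  -- weak convergence of the constant sequence
  have hweak : WeakConv (fun n => ContinuousMap.const (Set.Icc (0:ℝ) T) (e n))
      (0 : C(Set.Icc (0:ℝ) T, H)) := by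
    intro f
    let constL : H →L[ℝ] C(Set.Icc (0:ℝ) T, H) :=
      LinearMap.mkContinuous
        { toFun := fun h => ContinuousMap.const _ h
          map_add' := fun a b => by ext t; simp
          map_smul' := fun c a => by ext t; simp }
        1
        (fun h => by
          rw [one_mul]
          exact (ContinuousMap.norm_le _ (norm_nonneg h)).2 fun t => le_refl _)
    obtain ⟨z, hz⟩ := (InnerProductSpace.toDual ℝ H).surjective (f.comp constL)
    have hfn : ∀ n, f (ContinuousMap.const (Set.Icc (0:ℝ) T) (e n))
        = (inner ℝ z (e n) : ℝ) := by
      intro n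
      have : (InnerProductSpace.toDual ℝ H z) (e n) = (f.comp constL) (e n) := by rw [hz]
      simpa [InnerProductSpace.toDual_apply_apply, constL] using this.symm
    have : Tendsto (fun n => f (ContinuousMap.const (Set.Icc (0:ℝ) T) (e n)))
        atTop (nhds 0) := by
      simp only [hfn]
      exact tendsto_inner_orthonormal e he z
    simpa using this
  -- the limsup computation
  have hlimsup : limsup (fun n => 𝒜 (ContinuousMap.const (Set.Icc (0:ℝ) T) (e n))
      (ι (ContinuousMap.const (Set.Icc (0:ℝ) T) (e n)))) atTop = -T := by
    simp only [hAself]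
    exact limsup_const _
  -- the liminf computation
  have hliminf : ∀ y : Lp H p (volume.restrict (Set.Ioo (0:ℝ) T)),
      liminf (fun n => 𝒜 (ContinuousMap.const (Set.Icc (0:ℝ) T) (e n))
        (ι (ContinuousMap.const (Set.Icc (0:ℝ) T) (e n)) - y)) atTop = -T := by
    intro y
    have heq : ∀ n, 𝒜 (ContinuousMap.const (Set.Icc (0:ℝ) T) (e n))
        (ι (ContinuousMap.const (Set.Icc (0:ℝ) T) (e n)) - y)
        = -T + (inner ℝ (∫ t, y t ∂(volume.restrict (Set.Ioo (0:ℝ) T))) (e n) : ℝ) := by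
      intro n
      rw [map_sub, hAself n, hAconst n y, real_inner_comm]
      ring
    have htend : Tendsto (fun n => 𝒜 (ContinuousMap.const (Set.Icc (0:ℝ) T) (e n))
        (ι (ContinuousMap.const (Set.Icc (0:ℝ) T) (e n)) - y)) atTop (nhds (-T)) := by
      simp only [heq]
      have := (tendsto_const_nhds (x := -T) (f := atTop (α := ℕ))).add
        (tendsto_inner_orthonormal e he (∫ t, y t ∂(volume.restrict (Set.Ioo (0:ℝ) T))))
      simpa using this
    exact htend.liminf_eq
  have hAzero : ∀ y : Lp H p (volume.restrict (Set.Ioo (0:ℝ) T)), 𝒜 0 ((0 : Lp H p (volume.restrict (Set.Ioo (0:ℝ) T))) - y) = 0 := by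
    intro y
    rw [h𝒜]
    simp
  refine ⟨hM, hweak, hlimsup, fun y => ⟨hliminf y, hAzero y⟩, ?_⟩
  -- negation of pseudo-monotonicity
  intro hPM
  have hls : limsup (fun n => 𝒜 (ContinuousMap.const (Set.Icc (0:ℝ) T) (e n))
      (ι (ContinuousMap.const (Set.Icc (0:ℝ) T) (e n))
        - ι (0 : C(Set.Icc (0:ℝ) T, H)))) atTop ≤ 0 := by
    have : ∀ n, 𝒜 (ContinuousMap.const (Set.Icc (0:ℝ) T) (e n))
        (ι (ContinuousMap.const (Set.Icc (0:ℝ) T) (e n))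
          - ι (0 : C(Set.Icc (0:ℝ) T, H))) = -T := by
      intro n
      rw [map_zero, sub_zero, hAself n]
    simp only [this]
    rw [limsup_const]
    linarith
  have h := hPM (fun n => ContinuousMap.const (Set.Icc (0:ℝ) T) (e n)) 0 hweak hls 0
  rw [map_zero] at h
  have h0 : 𝒜 (0 : C(Set.Icc (0:ℝ) T, H)) ((0 : Lp H p (volume.restrict (Set.Ioo (0:ℝ) T))) - 0) = 0 := hAzero 0
  rw [h0, hliminf 0] at h
  linarith
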